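/- Fix an integer γ ≥ 1 and a nonzero real number h. Let C(h) be the γ×γ matrix with entries c_{αβ}(h) = h^{2γ−α−β−1}/((2γ−α−β−1)·(γ−α−1)!·(γ−β−1)!) for 0 ≤ α, β ≤ γ−1. Let L(h) be the γ×γ lower triangular matrix with entries l_{αβ}(h) = h^{β−α} · α! · (2γ−β−1)! · (γ−β−1)! · (2γ−α−β−2)! / (β! · (α−β)! · (2γ−α−1)! · (γ−α−1)! · (2γ−2β−2)!) for 0 ≤ β ≤ α ≤ γ−1 and 0 otherwise, and let U(h) be the γ×γ upper triangular matrix with entries u_{αβ}(h) = h^{2γ−α−β−1} · α! · β! · (2γ−2α−1)! · (2γ−α−β−2)! / ((β−α)! · (2γ−α−1)! · (2γ−β−1)! · (γ−α−1)! · (γ−β−1)!) for 0 ≤ α ≤ β ≤ γ−1 and 0 otherwise. Then C(h) = L(h) · U(h). -/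

import Mathlib

set_option maxHeartbeats 1000000


open Matrix Finset Nat

/-- The upper triangular matrix `A(h)` with entries `h^(β-α)/(β-α)!` for `α ≤ β`. -/
noncomputable def matA (γ : ℕ) (h : ℝ) : Matrix (Fin γ) (Fin γ) ℝ :=
  fun α β =>
    if (α : ℕ) ≤ (β : ℕ) then h ^ ((β : ℕ) - (α : ℕ)) / (((β : ℕ) - (α : ℕ)).factorial : ℝ)
    else 0

/-- The matrix `B(h)` with entries `h^(2γ-α-β-1)/(2γ-α-β-1)!`. -/
noncomputable def matB (γ : ℕ) (h : ℝ) : Matrix (Fin γ) (Fin γ) ℝ :=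
  fun α β =>
    h ^ (2 * γ - (α : ℕ) - (β : ℕ) - 1) / ((2 * γ - (α : ℕ) - (β : ℕ) - 1).factorial : ℝ)

/-- The matrix `C(h)` with entries `h^(2γ-α-β-1)/((2γ-α-β-1)·(γ-α-1)!·(γ-β-1)!)`. -/
noncomputable def matC (γ : ℕ) (h : ℝ) : Matrix (Fin γ) (Fin γ) ℝ :=
  fun α β =>
    h ^ (2 * γ - (α : ℕ) - (β : ℕ) - 1) /
      (((2 * γ - (α : ℕ) - (β : ℕ) - 1) * (γ - (α : ℕ) - 1).factorial *
          (γ - (β : ℕ) - 1).factorial : ℕ) : ℝ)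

/-- The diagonal matrix `D` with entries `(-1)^(γ-α-1)`. -/
noncomputable def matD (γ : ℕ) : Matrix (Fin γ) (Fin γ) ℝ :=
  Matrix.diagonal fun α : Fin γ => (-1 : ℝ) ^ (γ - (α : ℕ) - 1)

/-- The lower triangular matrix `L(h)` from the LU decomposition of `C(h)`. -/
noncomputable def matL (γ : ℕ) (h : ℝ) : Matrix (Fin γ) (Fin γ) ℝ :=
  fun α β =>
    if (β : ℕ) ≤ (α : ℕ) then
      h ^ ((β : ℤ) - (α : ℤ)) *
        (((α : ℕ).factorial * (2 * γ - (β : ℕ) - 1).factorial * (γ - (β : ℕ) - 1).factorial *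
            (2 * γ - (α : ℕ) - (β : ℕ) - 2).factorial : ℕ) : ℝ) /
        (((β : ℕ).factorial * ((α : ℕ) - (β : ℕ)).factorial * (2 * γ - (α : ℕ) - 1).factorial *
            (γ - (α : ℕ) - 1).factorial * (2 * γ - 2 * (β : ℕ) - 2).factorial : ℕ) : ℝ)
    else 0

/-- The upper triangular matrix `U(h)` from the LU decomposition of `C(h)`. -/
noncomputable def matU (γ : ℕ) (h : ℝ) : Matrix (Fin γ) (Fin γ) ℝ :=
  fun α β =>
    if (α : ℕ) ≤ (β : ℕ) then
      h ^ (2 * γ - (α : ℕ) - (β : ℕ) - 1) *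
        (((α : ℕ).factorial * (β : ℕ).factorial * (2 * γ - 2 * (α : ℕ) - 1).factorial *
            (2 * γ - (α : ℕ) - (β : ℕ) - 2).factorial : ℕ) : ℝ) /
        ((((β : ℕ) - (α : ℕ)).factorial * (2 * γ - (α : ℕ) - 1).factorial *
            (2 * γ - (β : ℕ) - 1).factorial * (γ - (α : ℕ) - 1).factorial *
            (γ - (β : ℕ) - 1).factorial : ℕ) : ℝ)
    else 0

/-- The diagonal matrix `D̂(h)` of diagonal entries of `U(h)`. -/
noncomputable def matDhat (γ : ℕ) (h : ℝ) : Matrix (Fin γ) (Fin γ) ℝ :=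
  Matrix.diagonal fun α : Fin γ =>
    h ^ (2 * γ - 2 * (α : ℕ) - 1) *
      (((α : ℕ).factorial ^ 2 * (2 * γ - 2 * (α : ℕ) - 2).factorial *
          (2 * γ - 2 * (α : ℕ) - 1).factorial : ℕ) : ℝ) /
      ((((γ - (α : ℕ) - 1).factorial) ^ 2 * ((2 * γ - (α : ℕ) - 1).factorial) ^ 2 : ℕ) : ℝ)


lemma fact_ne (n : ℕ) : (n.factorial : ℝ) ≠ 0 := by exact_mod_cast n.factorial_ne_zero

/-- the summand -/
noncomputable def tt (γ a b k : ℕ) : ℝ :=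
  ((2*γ - 2*k - 1 : ℕ):ℝ) * (2*γ - a - k - 2).factorial * (2*γ - b - k - 2).factorial /
    ((a - k).factorial * (b - k).factorial)

/-- the telescoping antidifference -/
noncomputable def TT (γ a b k : ℕ) : ℝ :=
  (2*γ - a - k - 1).factorial * (2*γ - b - k - 1).factorial /
    (((2*γ - a - b - 1 : ℕ):ℝ) * (a - k).factorial * (b - k).factorial)

lemma step (γ a b k : ℕ) (ha : a < γ) (hb : b < γ) (hka : k + 1 ≤ a) (hkb : k + 1 ≤ b) :
    ((2*γ - 2*k - 1 : ℕ):ℝ) * (2*γ - a - k - 2).factorial * (2*γ - b - k - 2).factorial /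
      ((a - k).factorial * (b - k).factorial)
    = (2*γ - a - k - 1).factorial * (2*γ - b - k - 1).factorial /
        (((2*γ - a - b - 1 : ℕ):ℝ) * (a - k).factorial * (b - k).factorial)
      - (2*γ - a - (k+1) - 1).factorial * (2*γ - b - (k+1) - 1).factorial /
        (((2*γ - a - b - 1 : ℕ):ℝ) * (a - (k+1)).factorial * (b - (k+1)).factorial) := by
  have r1 : 2*γ - a - k - 1 = (2*γ - a - k - 2) + 1 := by omega
  have r2 : 2*γ - b - k - 1 = (2*γ - b - k - 2) + 1 := by omega
  have r3 : a - k = (a - (k+1)) + 1 := by omega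
  have r4 : b - k = (b - (k+1)) + 1 := by omega
  have r5 : 2*γ - a - (k+1) - 1 = 2*γ - a - k - 2 := by omega
  have r6 : 2*γ - b - (k+1) - 1 = 2*γ - b - k - 2 := by omega
  rw [r5, r6, r1, r2, r3, r4, Nat.factorial_succ (2*γ - a - k - 2), Nat.factorial_succ (2*γ - b - k - 2),
    Nat.factorial_succ (a - (k+1)), Nat.factorial_succ (b - (k+1))]
  have c1 : ((2*γ - 2*k - 1 : ℕ):ℝ) = 2*(γ:ℝ) - 2*k - 1 := by
    have e : (2*γ - 2*k - 1 : ℕ) = 2*γ - (2*k + 1) := by omega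
    rw [e, Nat.cast_sub (by omega)]; push_cast; ring
  have c2 : ((2*γ - a - b - 1 : ℕ):ℝ) = 2*(γ:ℝ) - a - b - 1 := by
    have e : (2*γ - a - b - 1 : ℕ) = 2*γ - (a + b + 1) := by omega
    rw [e, Nat.cast_sub (by omega)]; push_cast; ring
  have c3 : (((2*γ - a - k - 2) + 1 : ℕ):ℝ) = 2*(γ:ℝ) - a - k - 1 := by
    have e : (2*γ - a - k - 2) + 1 = 2*γ - (a + k + 1) := by omega
    rw [e, Nat.cast_sub (by omega)]; push_cast; ring
  have c4 : (((2*γ - b - k - 2) + 1 : ℕ):ℝ) = 2*(γ:ℝ) - b - k - 1 := by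
    have e : (2*γ - b - k - 2) + 1 = 2*γ - (b + k + 1) := by omega
    rw [e, Nat.cast_sub (by omega)]; push_cast; ring
  have c5 : (((a - (k+1)) + 1 : ℕ):ℝ) = (a:ℝ) - k := by
    have e : (a - (k+1)) + 1 = a - k := by omega
    rw [e, Nat.cast_sub (by omega)]
  have c6 : (((b - (k+1)) + 1 : ℕ):ℝ) = (b:ℝ) - k := by
    have e : (b - (k+1)) + 1 = b - k := by omega
    rw [e, Nat.cast_sub (by omega)]
  push_cast [c1, c2, c3, c4, c5, c6]
  have ha' : (a:ℝ) + 1 ≤ γ := by exact_mod_cast ha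
  have hb' : (b:ℝ) + 1 ≤ γ := by exact_mod_cast hb
  have hka' : (k:ℝ) + 1 ≤ a := by exact_mod_cast hka
  have hkb' : (k:ℝ) + 1 ≤ b := by exact_mod_cast hkb
  have hd : 2*(γ:ℝ) - a - b - 1 ≠ 0 := by nlinarith
  have hak : (a:ℝ) - k ≠ 0 := by nlinarith
  have hbk : (b:ℝ) - k ≠ 0 := by nlinarith
  field_simp
  ring

lemma lastterm (γ a b m : ℕ) (ha : a < γ) (hb : b < γ) (hm : m = min a b) :
    tt γ a b m = TT γ a b m := by
  have hma : m ≤ a := by omega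
  have hmb : m ≤ b := by omega
  unfold tt TT
  have r1 : 2*γ - a - m - 1 = (2*γ - a - m - 2) + 1 := by omega
  have r2 : 2*γ - b - m - 1 = (2*γ - b - m - 2) + 1 := by omega
  rw [r1, r2, Nat.factorial_succ, Nat.factorial_succ]
  have c1 : ((2*γ - 2*m - 1 : ℕ):ℝ) = 2*(γ:ℝ) - 2*m - 1 := by
    have e : (2*γ - 2*m - 1 : ℕ) = 2*γ - (2*m + 1) := by omega
    rw [e, Nat.cast_sub (by omega)]; push_cast; ring
  have c2 : ((2*γ - a - b - 1 : ℕ):ℝ) = 2*(γ:ℝ) - a - b - 1 := by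
    have e : (2*γ - a - b - 1 : ℕ) = 2*γ - (a + b + 1) := by omega
    rw [e, Nat.cast_sub (by omega)]; push_cast; ring
  have c3 : (((2*γ - a - m - 2) + 1 : ℕ):ℝ) = 2*(γ:ℝ) - a - m - 1 := by
    have e : (2*γ - a - m - 2) + 1 = 2*γ - (a + m + 1) := by omega
    rw [e, Nat.cast_sub (by omega)]; push_cast; ring
  have c4 : (((2*γ - b - m - 2) + 1 : ℕ):ℝ) = 2*(γ:ℝ) - b - m - 1 := by
    have e : (2*γ - b - m - 2) + 1 = 2*γ - (b + m + 1) := by omega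
    rw [e, Nat.cast_sub (by omega)]; push_cast; ring
  push_cast [c1, c2, c3, c4]
  have ha' : (a:ℝ) + 1 ≤ γ := by exact_mod_cast ha
  have hb' : (b:ℝ) + 1 ≤ γ := by exact_mod_cast hb
  have hd : 2*(γ:ℝ) - a - b - 1 ≠ 0 := by nlinarith
  rcases (show a = m ∨ b = m by omega) with hcase | hcase <;> subst hcase <;>
    · field_simp
      ring

lemma step' (γ a b k : ℕ) (ha : a < γ) (hb : b < γ) (hka : k + 1 ≤ a) (hkb : k + 1 ≤ b) :
    tt γ a b k = TT γ a b k - TT γ a b (k+1) := by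
  unfold tt TT
  exact step γ a b k ha hb hka hkb

lemma keysum (γ a b : ℕ) (ha : a < γ) (hb : b < γ) :
    ∑ k ∈ Finset.range (min a b + 1), tt γ a b k
    = (2*γ - a - 1).factorial * (2*γ - b - 1).factorial /
        (((2*γ - a - b - 1 : ℕ):ℝ) * a.factorial * b.factorial) := by
  rw [Finset.sum_range_succ]
  rw [Finset.sum_congr rfl (fun k hk => step' γ a b k ha hb
      (by have := Finset.mem_range.mp hk; omega) (by have := Finset.mem_range.mp hk; omega)),
    Finset.sum_range_sub' (TT γ a b), lastterm γ a b _ ha hb rfl, sub_add_cancel]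
  simp [TT]

lemma prodterm (γ a b k : ℕ) (h : ℝ) (hh : h ≠ 0) (ha : a < γ) (hb : b < γ)
    (hka : k ≤ a) (hkb : k ≤ b) :
    (h ^ ((k:ℤ) - (a:ℤ)) *
      ((a.factorial * (2*γ - k - 1).factorial * (γ - k - 1).factorial *
          (2*γ - a - k - 2).factorial : ℕ):ℝ) /
      ((k.factorial * (a - k).factorial * (2*γ - a - 1).factorial * (γ - a - 1).factorial *
          (2*γ - 2*k - 2).factorial : ℕ):ℝ)) *
    (h ^ (2*γ - k - b - 1) *
      ((k.factorial * b.factorial * (2*γ - 2*k - 1).factorial *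
          (2*γ - k - b - 2).factorial : ℕ):ℝ) /
      (((b - k).factorial * (2*γ - k - 1).factorial * (2*γ - b - 1).factorial *
          (γ - k - 1).factorial * (γ - b - 1).factorial : ℕ):ℝ))
    = h ^ (2*γ - a - b - 1) *
        ((a.factorial * b.factorial : ℝ) /
          (((2*γ - a - 1).factorial : ℝ) * ((γ - a - 1).factorial : ℝ) *
            ((2*γ - b - 1).factorial : ℝ) * ((γ - b - 1).factorial : ℝ))) *
        tt γ a b k := by
  have hp : h ^ ((k:ℤ) - (a:ℤ)) * h ^ (2*γ - k - b - 1) = h ^ (2*γ - a - b - 1) := by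
    rw [← zpow_natCast h (2*γ - k - b - 1), ← zpow_natCast h (2*γ - a - b - 1), ← zpow_add₀ hh]
    congr 1
    omega
  have main :
      ((a.factorial * (2*γ - k - 1).factorial * (γ - k - 1).factorial *
          (2*γ - a - k - 2).factorial : ℕ):ℝ) /
        ((k.factorial * (a - k).factorial * (2*γ - a - 1).factorial * (γ - a - 1).factorial *
          (2*γ - 2*k - 2).factorial : ℕ):ℝ) *
      (((k.factorial * b.factorial * (2*γ - 2*k - 1).factorial *
          (2*γ - k - b - 2).factorial : ℕ):ℝ) /
        (((b - k).factorial * (2*γ - k - 1).factorial * (2*γ - b - 1).factorial *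
          (γ - k - 1).factorial * (γ - b - 1).factorial : ℕ):ℝ))
      = ((a.factorial * b.factorial : ℝ) /
          (((2*γ - a - 1).factorial : ℝ) * ((γ - a - 1).factorial : ℝ) *
            ((2*γ - b - 1).factorial : ℝ) * ((γ - b - 1).factorial : ℝ))) *
        tt γ a b k := by
    unfold tt
    have rB : 2*γ - k - b - 2 = 2*γ - b - k - 2 := by omega
    have rW : 2*γ - 2*k - 1 = (2*γ - 2*k - 2) + 1 := by omega
    rw [rB, rW, Nat.factorial_succ]
    push_cast
    field_simp
  rw [← hp]
  linear_combination (h ^ ((k:ℤ) - (a:ℤ)) * h ^ (2*γ - k - b - 1)) * main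

theorem matC_eq_matL_mul_matU (γ : ℕ) (hγ : 1 ≤ γ) (h : ℝ) (hh : h ≠ 0) :
    matC γ h = matL γ h * matU γ h := by
  ext α β
  have ha : (α:ℕ) < γ := α.isLt
  have hb : (β:ℕ) < γ := β.isLt
  rw [Matrix.mul_apply]
  set c : ℝ := h ^ (2*γ - (α:ℕ) - (β:ℕ) - 1) *
      ((((α:ℕ).factorial : ℝ) * ((β:ℕ).factorial : ℝ)) /
        (((2*γ - (α:ℕ) - 1).factorial : ℝ) * ((γ - (α:ℕ) - 1).factorial : ℝ) *
          ((2*γ - (β:ℕ) - 1).factorial : ℝ) * ((γ - (β:ℕ) - 1).factorial : ℝ))) with hc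
  set F : ℕ → ℝ := fun k =>
      if k ≤ min (α:ℕ) (β:ℕ) then c * tt γ (α:ℕ) (β:ℕ) k else 0 with hF
  have hterm : ∀ k : Fin γ, matL γ h α k * matU γ h k β = F (k:ℕ) := by
    intro k
    simp only [hF]
    by_cases h1 : (k:ℕ) ≤ (α:ℕ)
    · by_cases h2 : (k:ℕ) ≤ (β:ℕ)
      · simp only [matL, matU, if_pos h1, if_pos h2, if_pos (le_min h1 h2)]
        rw [hc, mul_assoc]
        have P := prodterm γ (α:ℕ) (β:ℕ) (k:ℕ) h hh ha hb h1 h2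
        push_cast at P ⊢
        linear_combination P
      · simp only [matL, matU, if_neg h2, mul_zero]
        rw [if_neg (by omega)]
    · simp only [matL, matU, if_neg h1, zero_mul]
      rw [if_neg (by omega)]
  rw [Finset.sum_congr rfl (fun k _ => hterm k), Fin.sum_univ_eq_sum_range F γ]
  rw [← Finset.sum_subset (Finset.range_subset_range.mpr
        (show min (α:ℕ) (β:ℕ) + 1 ≤ γ by omega))
      (fun x hx hx' => by
        simp only [hF]
        exact if_neg (fun hcc => hx' (Finset.mem_range.mpr (by omega))))]
  have hrw : ∀ k ∈ Finset.range (min (α:ℕ) (β:ℕ) + 1),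
      F k = c * tt γ (α:ℕ) (β:ℕ) k := by
    intro k hk
    have := Finset.mem_range.mp hk
    simp only [hF]
    rw [if_pos (by omega)]
  rw [Finset.sum_congr rfl hrw, ← Finset.mul_sum, keysum γ (α:ℕ) (β:ℕ) ha hb, hc]
  simp only [matC]
  have hD : ((2*γ - (α:ℕ) - (β:ℕ) - 1 : ℕ):ℝ) ≠ 0 := Nat.cast_ne_zero.mpr (by omega)
  have f1 := fact_ne ((α:ℕ))
  have f2 := fact_ne ((β:ℕ))
  have f3 := fact_ne (2*γ - (α:ℕ) - 1)
  have f4 := fact_ne (γ - (α:ℕ) - 1)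
  have f5 := fact_ne (2*γ - (β:ℕ) - 1)
  have f6 := fact_ne (γ - (β:ℕ) - 1)
  push_cast
  field_simp
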